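/- Let a_j > 0, c_j ≥ 0 for j = 1,…,u, σ² > 0, P > 0, and define H(η) = Σ_{j=1}^u (√P·a_j/√η − 1)² + Σ_{j=1}^u P·c_j/η + σ²/η for η > 0 (plus a constant independent of η). Then H is strictly decreasing on (0, η̂] and strictly increasing on [η̂, ∞), where η̂ = ((Σ_{j=1}^u P(a_j² + c_j) + σ²)/(Σ_{j=1}^u √P·a_j))², so η̂ is the unique minimizer of H on (0,∞). -/

import Mathlib

open Finset in
/-- `H(η) = Σ_j (√P a_j/√η − 1)² + Σ_j P c_j/η + σ²/η` is strictly decreasing on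
`(0, ηhat]` and strictly increasing on `[ηhat, ∞)`, where
`ηhat = ((Σ_j P(a_j² + c_j) + σ²)/(Σ_j √P a_j))²`, so `ηhat` is the unique minimizer. -/
theorem stmt_1 (u : ℕ) (hu : 0 < u) (a c : Fin u → ℝ) (ha : ∀ j, 0 < a j)
    (hc : ∀ j, 0 ≤ c j) (σ2 P : ℝ) (hσ : 0 < σ2) (hP : 0 < P)
    (H : ℝ → ℝ)
    (hH : ∀ η : ℝ, 0 < η →
      H η = ∑ j, (Real.sqrt P * a j / Real.sqrt η - 1) ^ 2
              + ∑ j, P * c j / η + σ2 / η)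
    (ηhat : ℝ)
    (hηhat : ηhat = ((∑ j, P * ((a j) ^ 2 + c j) + σ2) / (∑ j, Real.sqrt P * a j)) ^ 2) :
    StrictAntiOn H (Set.Ioc 0 ηhat) ∧ StrictMonoOn H (Set.Ici ηhat) ∧
    ∀ η : ℝ, 0 < η → η ≠ ηhat → H ηhat < H η := by
  set B := ∑ j, Real.sqrt P * a j with hB
  set A := ∑ j, P * ((a j) ^ 2 + c j) + σ2 with hA
  have hBpos : 0 < B :=
    Finset.sum_pos (fun j _ => mul_pos (Real.sqrt_pos.2 hP) (ha j))
      ⟨⟨0, hu⟩, Finset.mem_univ _⟩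
  have hApos : 0 < A := by
    have h1 : (0:ℝ) ≤ ∑ j, P * ((a j) ^ 2 + c j) :=
      Finset.sum_nonneg fun j _ => mul_nonneg hP.le (by nlinarith [hc j, sq_nonneg (a j)])
    rw [hA]; linarith
  have hPsq : Real.sqrt P ^ 2 = P := Real.sq_sqrt hP.le
  -- reformulate H
  have hform : ∀ η, 0 < η →
      H η = A * (1 / Real.sqrt η) ^ 2 - 2 * B * (1 / Real.sqrt η) + u := by
    intro η hη
    have hs : 0 < Real.sqrt η := Real.sqrt_pos.2 hη
    have hsq : Real.sqrt η ^ 2 = η := Real.sq_sqrt hη.le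
    rw [hH η hη]
    have h1 : ∀ j : Fin u, (Real.sqrt P * a j / Real.sqrt η - 1) ^ 2
        = P * (a j) ^ 2 * (1 / Real.sqrt η) ^ 2
          - 2 * (Real.sqrt P * a j) * (1 / Real.sqrt η) + 1 := by
      intro j
      have e1 : Real.sqrt P * a j / Real.sqrt η
          = (Real.sqrt P * a j) * (1 / Real.sqrt η) := by ring
      rw [e1]
      have e2 : (Real.sqrt P * a j * (1 / Real.sqrt η) - 1) ^ 2
          = (Real.sqrt P) ^ 2 * ((a j) ^ 2 * (1 / Real.sqrt η) ^ 2)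
            - 2 * (Real.sqrt P * a j) * (1 / Real.sqrt η) + 1 := by ring
      rw [e2, hPsq]; ring
    have h2 : ∀ j : Fin u, P * c j / η = P * c j * (1 / Real.sqrt η) ^ 2 := by
      intro j; rw [← hsq]; field_simp; rw [Real.sqrt_sq hs.le]
    have h3 : σ2 / η = σ2 * (1 / Real.sqrt η) ^ 2 := by
      rw [← hsq]; field_simp; rw [Real.sqrt_sq hs.le]
    rw [Finset.sum_congr rfl fun j _ => h1 j, Finset.sum_congr rfl fun j _ => h2 j, h3]
    rw [hA, hB]
    simp [Finset.sum_add_distrib, Finset.sum_sub_distrib, ← Finset.sum_mul,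
      Finset.mul_sum, Finset.card_univ]
    rw [show ∑ x, P * ((a x) ^ 2 + c x) = ∑ x, P * (a x) ^ 2 + ∑ x, P * c x from by
      rw [← Finset.sum_add_distrib]; exact Finset.sum_congr rfl fun j _ => by ring]
    ring
  have key : ∀ x y : ℝ, 0 < x → x < y → H x - H y
      = (1 / Real.sqrt x - 1 / Real.sqrt y)
        * (A * (1 / Real.sqrt x + 1 / Real.sqrt y) - 2 * B) := by
    intro x y hx hxy
    rw [hform x hx, hform y (hx.trans hxy)]
    ring
  have hηhat_pos : 0 < ηhat := by
    rw [hηhat]; positivity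
  have hsqrt_ηhat : Real.sqrt ηhat = A / B := by
    rw [hηhat, Real.sqrt_sq (div_pos hApos hBpos).le]
  -- for η ≤ ηhat : 1/√η ≥ B/A
  have hle : ∀ η : ℝ, 0 < η → η ≤ ηhat → B / A ≤ 1 / Real.sqrt η := by
    intro η hη hηle
    have hs : 0 < Real.sqrt η := Real.sqrt_pos.2 hη
    have h1 : Real.sqrt η ≤ A / B := by
      rw [← hsqrt_ηhat]; exact Real.sqrt_le_sqrt hηle
    have : B / A = 1 / (A / B) := by field_simp
    rw [this]
    exact one_div_le_one_div_of_le hs h1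
  have hge : ∀ η : ℝ, ηhat ≤ η → 1 / Real.sqrt η ≤ B / A := by
    intro η hηge
    have hs : 0 < Real.sqrt ηhat := Real.sqrt_pos.2 hηhat_pos
    have h1 : Real.sqrt ηhat ≤ Real.sqrt η := Real.sqrt_le_sqrt hηge
    have h2 : 1 / Real.sqrt η ≤ 1 / Real.sqrt ηhat := one_div_le_one_div_of_le hs h1
    rw [hsqrt_ηhat] at h2
    have : (1:ℝ) / (A / B) = B / A := by field_simp
    linarith [this ▸ h2]
  have htlt : ∀ x y : ℝ, 0 < x → x < y → 1 / Real.sqrt y < 1 / Real.sqrt x := by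
    intro x y hx hxy
    exact one_div_lt_one_div_of_lt (Real.sqrt_pos.2 hx)
      ((Real.sqrt_lt_sqrt hx.le hxy))
  have hanti : StrictAntiOn H (Set.Ioc 0 ηhat) := by
    intro x hx y hy hxy
    have hx0 : 0 < x := hx.1
    have htx := hle x hx0 hx.2
    have hty := hle y (hx0.trans hxy) hy.2
    have ht := htlt x y hx0 hxy
    have hk := key x y hx0 hxy
    have hBA : 0 < B / A := div_pos hBpos hApos
    have hfac : 0 < A * (1 / Real.sqrt x + 1 / Real.sqrt y) - 2 * B := by
      have : B / A + B / A < 1 / Real.sqrt x + 1 / Real.sqrt y := by linarith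
      have := (mul_lt_mul_iff_right₀ hApos).2 this
      have hAB : A * (B / A + B / A) = 2 * B := by field_simp; ring
      linarith [hAB ▸ this]
    nlinarith
  have hmono : StrictMonoOn H (Set.Ici ηhat) := by
    intro x hx y hy hxy
    have hx0 : 0 < x := hηhat_pos.trans_le hx
    have htx := hge x hx
    have hty := hge y (hx.trans hxy.le)
    have ht := htlt x y hx0 hxy
    have hk := key x y hx0 hxy
    have hfac : A * (1 / Real.sqrt x + 1 / Real.sqrt y) - 2 * B < 0 := by
      have : 1 / Real.sqrt x + 1 / Real.sqrt y < B / A + B / A := by linarith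
      have := (mul_lt_mul_iff_right₀ hApos).2 this
      have hAB : A * (B / A + B / A) = 2 * B := by field_simp; ring
      linarith [hAB ▸ this]
    nlinarith [sub_pos.2 ht]
  refine ⟨hanti, hmono, fun η hη hne => ?_⟩
  rcases lt_or_gt_of_ne hne with h | h
  · exact hanti ⟨hη, h.le⟩ ⟨hηhat_pos, le_refl _⟩ h
  · exact hmono (le_refl ηhat) h.le h
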